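/- Let p be an odd prime and 1 < b < p−1. Then N = (b^p + 1)/(b + 1) is either prime or a Midy pseudoprime to base b. -/

import Mathlib

/-- The multiplicative order of `b` modulo `N`. -/
noncomputable def ord (b N : ℕ) : ℕ := orderOf (b : ZMod N)

/-- `N` is a Midy pseudoprime to base `b`: `N` is odd composite, coprime to `b` and to
`|b|_N`, and `|b|_N = |b|_p` for every prime `p ∣ N` (equivalent characterization). -/
def MidyPsp (b N : ℕ) : Prop :=
  Odd N ∧ 1 < N ∧ ¬ N.Prime ∧ Nat.Coprime N b ∧ Nat.Coprime N (ord b N) ∧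
    ∀ p : ℕ, p.Prime → p ∣ N → ord b N = ord b p

theorem stmt13 (p b : ℕ) (hp : p.Prime) (hodd : Odd p) (hb : 1 < b) (hbp : b < p - 1) :
    ((b ^ p + 1) / (b + 1)).Prime ∨ MidyPsp b ((b ^ p + 1) / (b + 1)) := by
  set N := (b ^ p + 1) / (b + 1) with hNdef
  have hp2 := hp.two_le
  have hp5 : 5 ≤ p := by
    obtain ⟨k, hk⟩ := hodd
    omega
  have hdvd : (b + 1) ∣ b ^ p + 1 := by
    have := Odd.nat_add_dvd_pow_add_pow b 1 hodd
    simpa using this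
  have hNmul : (b + 1) * N = b ^ p + 1 := Nat.mul_div_cancel' hdvd
  -- N > b + 1
  have hb2 : 2 ≤ b := hb
  have h8 : 8 * b ^ 2 ≤ b ^ 5 := by
    have h3 : 8 ≤ b ^ 3 := by
      calc (8:ℕ) = 2 ^ 3 := by norm_num
        _ ≤ b ^ 3 := Nat.pow_le_pow_left hb2 3
    calc 8 * b ^ 2 ≤ b ^ 3 * b ^ 2 := Nat.mul_le_mul_right _ h3
      _ = b ^ 5 := by ring
  have h5p : b ^ 5 ≤ b ^ p := Nat.pow_le_pow_right (by omega) hp5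
  have hsq : (b + 1) * (b + 1) < b ^ p + 1 := by nlinarith
  have hNlarge : b + 1 < N := by
    have := hsq
    rw [← hNmul] at this
    exact lt_of_mul_lt_mul_left this (Nat.zero_le _)
  have hN1 : 1 < N := by omega
  -- integer identity: N = geometric sum of (-b)
  have hgeom : ((N : ℤ)) = ∑ i ∈ Finset.range p, (-(b : ℤ)) ^ i := by
    have hmul : (∑ i ∈ Finset.range p, (-(b : ℤ)) ^ i) * ((-(b : ℤ)) - 1)
        = (-(b : ℤ)) ^ p - 1 := geom_sum_mul _ _
    have hnp : (-(b : ℤ)) ^ p = -((b : ℤ) ^ p) := Odd.neg_pow hodd _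
    have hNmulZ : ((b : ℤ) + 1) * (N : ℤ) = (b : ℤ) ^ p + 1 := by
      exact_mod_cast congrArg (Nat.cast : ℕ → ℤ) hNmul
    have hbne : ((b : ℤ) + 1) ≠ 0 := by positivity
    apply mul_left_cancel₀ hbne
    rw [hNmulZ]
    rw [hnp] at hmul
    linarith [hmul]
  -- (b+1) ∣ N - p over ℤ
  have hmodp : ((b : ℤ) + 1) ∣ (N : ℤ) - (p : ℤ) := by
    have : (N : ℤ) - (p : ℤ) = ∑ i ∈ Finset.range p, ((-(b : ℤ)) ^ i - 1) := by
      rw [hgeom, Finset.sum_sub_distrib]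
      simp
    rw [this]
    apply Finset.dvd_sum
    intro i _
    have h1 : (-(b : ℤ)) - 1 ∣ (-(b : ℤ)) ^ i - 1 ^ i := sub_dvd_pow_sub_pow _ _ _
    simp only [one_pow] at h1
    have : ((b : ℤ) + 1) ∣ (-(b : ℤ)) - 1 := ⟨-1, by ring⟩
    exact this.trans h1
  -- N is odd
  have hNodd : Odd N := by
    rcases Nat.even_or_odd b with hbe | hbo
    · have hodd' : Odd (b ^ p + 1) := by
        have : Even (b ^ p) := Nat.even_pow.mpr ⟨hbe, by omega⟩
        exact this.add_one
      rw [← hNmul] at hodd'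
      exact (Nat.odd_mul.mp hodd').2
    · obtain ⟨k, hk⟩ : (2 : ℤ) ∣ (N : ℤ) - (p : ℤ) := by
        refine dvd_trans ?_ hmodp
        obtain ⟨m, hm⟩ := hbo
        exact ⟨m + 1, by push_cast [hm]; ring⟩
      obtain ⟨m, hm⟩ := hodd
      rw [Nat.odd_iff]
      omega
  -- p does not divide N
  have hbp1 : b + 1 < p := by omega
  have hNdvdpow : N ∣ b ^ p + 1 := ⟨b + 1, by rw [← hNmul]; ring⟩
  have hpN : ¬ p ∣ N := by
    intro h
    have hpdvd : p ∣ b ^ p + 1 := h.trans hNdvdpow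
    haveI : Fact p.Prime := ⟨hp⟩
    have : ((b ^ p + 1 : ℕ) : ZMod p) = 0 :=
      (ZMod.natCast_eq_zero_iff _ _).mpr hpdvd
    push_cast at this
    rw [ZMod.pow_card] at this
    have : ((b + 1 : ℕ) : ZMod p) = 0 := by push_cast; linear_combination this
    have hdv : p ∣ b + 1 := (ZMod.natCast_eq_zero_iff _ _).mp this
    have := Nat.le_of_dvd (by omega) hdv
    omega
  -- coprimality with b
  have hcopb : N.Coprime b := by
    have h1 : Nat.Coprime (1 + b * b ^ (p - 1)) b :=
      (Nat.coprime_add_mul_left_left 1 b (b ^ (p - 1))).mpr (Nat.coprime_one_left b)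
    have heq : b ^ p + 1 = 1 + b * b ^ (p - 1) := by
      rw [← pow_succ']
      have : p - 1 + 1 = p := by omega
      rw [this]; ring
    exact Nat.Coprime.coprime_dvd_left hNdvdpow (heq ▸ h1)
  -- key order lemma
  have ordlem : ∀ m : ℕ, Odd m → 1 < m → m ∣ b ^ p + 1 → ¬ m ∣ b + 1 →
      orderOf (b : ZMod m) = 2 * p := by
    intro m hmodd hm1 hmdvd hmb
    have hm3 : 2 < m := by
      obtain ⟨k, hk⟩ := hmodd
      omega
    haveI : Fact (2 < m) := ⟨hm3⟩
    haveI : NeZero m := ⟨by omega⟩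
    have hxp : (b : ZMod m) ^ p = -1 := by
      have h0 : ((b ^ p + 1 : ℕ) : ZMod m) = 0 :=
        (ZMod.natCast_eq_zero_iff _ _).mpr hmdvd
      push_cast at h0
      linear_combination h0
    have hne : (-1 : ZMod m) ≠ 1 := ZMod.neg_one_ne_one
    have hx2p : (b : ZMod m) ^ (2 * p) = 1 := by
      rw [mul_comm, pow_mul, hxp]; ring
    have hdvd2p : orderOf (b : ZMod m) ∣ 2 * p := orderOf_dvd_of_pow_eq_one hx2p
    set d := orderOf (b : ZMod m) with hd
    have hdp : ¬ d ∣ p := by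
      intro h
      have : (b : ZMod m) ^ p = 1 := orderOf_dvd_iff_pow_eq_one.mp h
      rw [hxp] at this
      exact hne this
    have hd2 : ¬ d ∣ 2 := by
      intro h
      have hx2 : (b : ZMod m) ^ 2 = 1 := orderOf_dvd_iff_pow_eq_one.mp h
      obtain ⟨k, hk⟩ := hodd
      have hxb : (b : ZMod m) ^ p = (b : ZMod m) := by
        rw [hk, pow_succ, pow_mul, hx2, one_pow, one_mul]
      rw [hxp] at hxb
      apply hmb
      have h0 : ((b + 1 : ℕ) : ZMod m) = 0 := by
        push_cast
        linear_combination -hxb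
      exact (ZMod.natCast_eq_zero_iff _ _).mp h0
    -- conclude d = 2p
    have hpd : p ∣ d := by
      by_contra hnd
      have hcop : Nat.Coprime p d := (hp.coprime_iff_not_dvd).mpr hnd
      have : d ∣ 2 := Nat.Coprime.dvd_of_dvd_mul_right hcop.symm hdvd2p
      exact hd2 this
    obtain ⟨k, hk⟩ := hpd
    have hppos : 0 < p := by omega
    have hk2 : k ∣ 2 := by
      have : p * k ∣ p * 2 := by rw [← hk, mul_comm p 2]; exact hdvd2p
      exact (Nat.mul_dvd_mul_iff_left hppos).mp this
    rcases (Nat.dvd_prime Nat.prime_two).mp hk2 with h1 | h2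
    · exfalso; apply hdp; rw [hk, h1, mul_one]
    · rw [hk, h2, mul_comm]
  -- order mod N
  have hordN : orderOf (b : ZMod N) = 2 * p := by
    apply ordlem N hNodd hN1 hNdvdpow
    intro h
    have := Nat.le_of_dvd (by omega) h
    omega
  -- order mod each prime divisor
  have hordq : ∀ q : ℕ, q.Prime → q ∣ N → orderOf (b : ZMod q) = 2 * p := by
    intro q hq hqN
    have hq2 : q ≠ 2 := by
      intro h
      rw [h] at hqN
      rw [Nat.odd_iff] at hNodd
      omega
    have hqodd : Odd q := hq.odd_of_ne_two hq2
    apply ordlem q hqodd hq.one_lt (hqN.trans hNdvdpow)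
    intro hqb
    -- q ∣ b + 1 and q ∣ N ⇒ q ∣ p ⇒ q = p ⇒ p ∣ N, contradiction
    have hz1 : (q : ℤ) ∣ (N : ℤ) - (p : ℤ) :=
      dvd_trans (by exact_mod_cast Int.natCast_dvd_natCast.mpr hqb) hmodp
    have hz2 : (q : ℤ) ∣ (N : ℤ) := Int.natCast_dvd_natCast.mpr hqN
    have hz3 : (q : ℤ) ∣ (p : ℤ) := by
      have := dvd_sub hz2 hz1
      simpa using this
    have hqp : q ∣ p := Int.natCast_dvd_natCast.mp hz3
    have : q = p := (Nat.prime_dvd_prime_iff_eq hq hp).mp hqp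
    exact hpN (this ▸ hqN)
  -- coprime N (2 * p)
  have hcop2p : Nat.Coprime N (2 * p) := by
    apply Nat.Coprime.mul_right
    · rw [Nat.coprime_comm]
      apply (Nat.prime_two.coprime_iff_not_dvd).mpr
      rw [Nat.odd_iff] at hNodd
      omega
    · rw [Nat.coprime_comm]
      exact (hp.coprime_iff_not_dvd).mpr hpN
  by_cases hNp : N.Prime
  · exact Or.inl hNp
  · right
    refine ⟨hNodd, hN1, hNp, hcopb, ?_, ?_⟩
    · show Nat.Coprime N (ord b N)
      unfold ord
      rw [hordN]
      exact hcop2p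
    · intro q hq hqN
      show orderOf (b : ZMod N) = orderOf (b : ZMod q)
      rw [hordN, hordq q hq hqN]
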